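/- arXiv:2007.13062 — 4 statements merged into one kernel-verified Lean document; each statement's English description precedes it below -/
import Mathlib

section
/- Let α, β, λ₁, λ₂ be real numbers with α ≠ 0, and let A : Matrix (Fin 3) (Fin 3) ℝ be the Ricci operator matrix of the Lorentzian Lie group G₁, namely A = ![![-β²/2, -α*β, -α*β], ![-α*β, -(2*α² + β²/2), -2*α²], ![α*β, 2*α², 2*α² - β²/2]]. Then A * η * Aᵀ + λ₁ • (A * η) + λ₂ • η = 0 if and only if β = 0 and λ₁ = 0 and λ₂ = 0. -/
open Matrix

set_option maxHeartbeats 1000000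

/-- The Lorentzian Lie group `G₁` (with Ricci operator matrix `A`) is `Ein(2)`,
i.e. `ρ² + λ₁ρ + λ₂g = 0`, if and only if `β = 0`, `λ₁ = 0` and `λ₂ = 0`. -/
theorem G1_Ein2 (α β lam1 lam2 : ℝ) (hα : α ≠ 0)
    (η A : Matrix (Fin 3) (Fin 3) ℝ)
    (hη : η = Matrix.diagonal ![1, 1, -1])
    (hA : A = !![-β^2/2, -(α*β), -(α*β);
                 -(α*β), -(2*α^2 + β^2/2), -(2*α^2);
                 α*β, 2*α^2, 2*α^2 - β^2/2]) :
    A * η * Aᵀ + lam1 • (A * η) + lam2 • η = 0 ↔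
      (β = 0 ∧ lam1 = 0 ∧ lam2 = 0) := by
  have hd : (Matrix.diagonal ![1, 1, -1] : Matrix (Fin 3) (Fin 3) ℝ)
      = !![1,0,0; 0,1,0; 0,0,-1] := by
    ext i j
    fin_cases i <;> fin_cases j <;>
      simp [Matrix.diagonal_apply, Matrix.vecHead, Matrix.vecTail, Fin.ext_iff]
  have hT : (!![-β^2/2, -(α*β), -(α*β);
                 -(α*β), -(2*α^2 + β^2/2), -(2*α^2);
                 α*β, 2*α^2, 2*α^2 - β^2/2] : Matrix (Fin 3) (Fin 3) ℝ)ᵀ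
      = !![-β^2/2, -(α*β), α*β;
           -(α*β), -(2*α^2 + β^2/2), 2*α^2;
           -(α*β), -(2*α^2), 2*α^2 - β^2/2] := by
    ext i j
    fin_cases i <;> fin_cases j <;> simp [Matrix.vecHead, Matrix.vecTail]
  subst hη hA
  rw [hd, hT]
  constructor
  · intro h
    have h12 := congrFun (congrFun h 1) 2
    have h01 := congrFun (congrFun h 0) 1
    have h00 := congrFun (congrFun h 0) 0
    simp [Matrix.mul_apply, Fin.sum_univ_three, Matrix.vecHead, Matrix.vecTail] at h12 h01 h00
    have ha2 : α^2 ≠ 0 := pow_ne_zero 2 hα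
    have hl1 : lam1 = 3 * β^2 / 2 := by
      have : α^2 * (2 * lam1 - 3 * β^2) = 0 := by nlinarith [h12]
      rcases mul_eq_zero.mp this with h' | h'
      · exact absurd h' ha2
      · linarith
    have hb : β = 0 := by
      have hβ3 : α * β^3 = 0 := by nlinarith [h01]
      rcases mul_eq_zero.mp hβ3 with h' | h'
      · exact absurd h' hα
      · exact pow_eq_zero_iff (n := 3) (by norm_num) |>.mp h'
    subst hb
    have hl1' : lam1 = 0 := by rw [hl1]; ring
    subst hl1'
    refine ⟨rfl, rfl, ?_⟩
    nlinarith [h00]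
  · rintro ⟨rfl, rfl, rfl⟩
    ext i j
    fin_cases i <;> fin_cases j <;>
      (simp [Matrix.mul_apply, Fin.sum_univ_three, Matrix.vecHead, Matrix.vecTail]; try ring)
end

section
/- Let α, β, γ, λ₁, λ₂ be real numbers with γ ≠ 0, and let A : Matrix (Fin 3) (Fin 3) ℝ be the Ricci operator matrix of the Lorentzian Lie group G₂, namely A = ![![-(α²/2 + 2*γ²), 0, 0], ![0, α²/2 - α*β, α*γ - 2*β*γ], ![0, 2*β*γ - α*γ, α²/2 - α*β]]. Then A * η * Aᵀ + λ₁ • (A * η) + λ₂ • η = 0 if and only if α = 2*β and λ₁ = α²/2 + 2*γ² and λ₂ = 0. -/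
open Matrix

set_option maxHeartbeats 1600000 in
/-- The Lorentzian Lie group `G₂` (with Ricci operator matrix `A`) is `Ein(2)`
if and only if `α = 2β`, `λ₁ = α²/2 + 2γ²` and `λ₂ = 0`. -/
theorem G2_Ein2 (α β γ lam1 lam2 : ℝ) (hγ : γ ≠ 0)
    (η A : Matrix (Fin 3) (Fin 3) ℝ)
    (hη : η = Matrix.diagonal ![1, 1, -1])
    (hA : A = !![-(α^2/2 + 2*γ^2), 0, 0;
                 0, α^2/2 - α*β, α*γ - 2*β*γ;
                 0, 2*β*γ - α*γ, α^2/2 - α*β]) :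
    A * η * Aᵀ + lam1 • (A * η) + lam2 • η = 0 ↔
      (α = 2*β ∧ lam1 = α^2/2 + 2*γ^2 ∧ lam2 = 0) := by
  have hd : (Matrix.diagonal ![1, 1, -1] : Matrix (Fin 3) (Fin 3) ℝ) =
      !![1, 0, 0; 0, 1, 0; 0, 0, -1] := by
    ext i j
    fin_cases i <;> fin_cases j <;>
      simp [Matrix.diagonal_apply, Matrix.vecHead, Matrix.vecTail]
  have ht : (!![-(α^2/2 + 2*γ^2), 0, 0;
                 0, α^2/2 - α*β, α*γ - 2*β*γ;
                 0, 2*β*γ - α*γ, α^2/2 - α*β])ᵀ =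
      !![-(α^2/2 + 2*γ^2), 0, 0;
         0, α^2/2 - α*β, 2*β*γ - α*γ;
         0, α*γ - 2*β*γ, α^2/2 - α*β] := by
    ext i j
    fin_cases i <;> fin_cases j <;>
      simp [Matrix.vecHead, Matrix.vecTail]
  subst hη hA
  rw [hd, ht]
  constructor
  · intro h
    have h00 := congrFun (congrFun h 0) 0
    have h11 := congrFun (congrFun h 1) 1
    have h12 := congrFun (congrFun h 1) 2
    simp [Matrix.mul_apply, Fin.sum_univ_three] at h00 h11 h12
    have hαβ : α = 2*β := by
      by_cases hq : (2*β*γ - α*γ) = 0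
      · have hγ2 : γ * (2*β - α) = 0 := by linear_combination hq
        rcases mul_eq_zero.mp hγ2 with h' | h'
        · exact absurd h' hγ
        · linarith
      · exfalso
        have hl1 : lam1 = -2*(α^2/2 - α*β) := by
          have h12' : (2*β*γ - α*γ) * (2*(α^2/2 - α*β) + lam1) = 0 := by
            linear_combination h12
          rcases mul_eq_zero.mp h12' with h' | h'
          · exact absurd h' hq
          · linarith
        have hl2 : lam2 = (α^2/2 - α*β)^2 + (2*β*γ - α*γ)^2 := by
          linear_combination h11 - (α^2/2 - α*β) * hl1
        have hqpos : (2*β*γ - α*γ)^2 > 0 := by positivity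
        nlinarith [sq_nonneg ((-(α^2/2 + 2*γ^2)) - (α^2/2 - α*β)), hqpos, h00, hl1, hl2]
    subst hαβ
    ring_nf at h00 h11
    have hl2 : lam2 = 0 := by linarith
    have hs : (2*β^2 + 2*γ^2) ≠ 0 := by positivity
    have key : (2*β^2 + 2*γ^2) * ((2*β^2 + 2*γ^2) - lam1) = 0 := by
      linear_combination h00 - hl2
    rcases mul_eq_zero.mp key with h' | h'
    · exact absurd h' hs
    · constructor
      · rfl
      · constructor
        · linarith
        · exact hl2
  · rintro ⟨h1, h2, h3⟩
    ext i j
    simp only [Matrix.add_apply, Matrix.smul_apply, Matrix.zero_apply, Matrix.mul_apply,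
      Fin.sum_univ_three, smul_eq_mul]
    fin_cases i <;> fin_cases j <;>
      norm_num [Matrix.vecHead, Matrix.vecTail, Matrix.cons_val_two]
    all_goals (subst h3; subst h2; subst h1; ring)
end

section
/- Let α, β be real numbers. On ℝ³ with standard basis e₁, e₂, e₃, let the bracket be the bilinear antisymmetric map determined by [e₁,e₂] = α•e₁ - β•e₃, [e₁,e₃] = -α•e₁ - β•e₂, [e₂,e₃] = β•e₁ + α•e₂ + α•e₃ (the Lie algebra of G₁), and let ∇ be the bilinear map ℝ³ → ℝ³ → ℝ³ determined on basis vectors by ∇_{e₁}e₁ = -α•e₂ - α•e₃, ∇_{e₂}e₁ = (β/2)•e₃, ∇_{e₃}e₁ = (β/2)•e₂, ∇_{e₁}e₂ = α•e₁ - (β/2)•e₃, ∇_{e₂}e₂ = α•e₃, ∇_{e₃}e₂ = -(β/2)•e₁ - α•e₃, ∇_{e₁}e₃ = -α•e₁ - (β/2)•e₂, ∇_{e₂}e₃ = (β/2)•e₁ + α•e₂, ∇_{e₃}e₃ = -α•e₂. Then for all X, Y, Z ∈ ℝ³, 2*g(∇_X Y, Z) = g([X,Y], Z) - g([Y,Z],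 X) + g([Z,X], Y), i.e. ∇ satisfies the Koszul formula characterizing the Levi-Civita connection of the left-invariant Lorentzian metric g. -/
noncomputable section

/-- The standard basis of `ℝ³`. -/
def e₁ : Fin 3 → ℝ := ![1, 0, 0]
def e₂ : Fin 3 → ℝ := ![0, 1, 0]
def e₃ : Fin 3 → ℝ := ![0, 0, 1]

/-- The Lorentzian inner product with `e₁, e₂, e₃` pseudo-orthonormal, `e₃` timelike. -/
def g (X Y : Fin 3 → ℝ) : ℝ := X 0 * Y 0 + X 1 * Y 1 - X 2 * Y 2

/-- The bilinear antisymmetric bracket of the Lie algebra of `G₁`: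
`[e₁,e₂] = αe₁ - βe₃`, `[e₁,e₃] = -αe₁ - βe₂`, `[e₂,e₃] = βe₁ + αe₂ + αe₃`. -/
def bracket (α β : ℝ) (X Y : Fin 3 → ℝ) : Fin 3 → ℝ :=
  (X 0 * Y 1 - X 1 * Y 0) • (α • e₁ - β • e₃) +
  (X 0 * Y 2 - X 2 * Y 0) • (-α • e₁ - β • e₂) +
  (X 1 * Y 2 - X 2 * Y 1) • (β • e₁ + α • e₂ + α • e₃)

/-- The candidate Levi-Civita connection of `G₁`, extended bilinearly from its
values on the basis vectors. -/
def nabla (α β : ℝ) (X Y : Fin 3 → ℝ) : Fin 3 → ℝ :=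
  (X 0 * Y 0) • (-α • e₂ - α • e₃) +
  (X 0 * Y 1) • (α • e₁ - (β/2) • e₃) +
  (X 0 * Y 2) • (-α • e₁ - (β/2) • e₂) +
  (X 1 * Y 0) • ((β/2) • e₃) +
  (X 1 * Y 1) • (α • e₃) +
  (X 1 * Y 2) • ((β/2) • e₁ + α • e₂) +
  (X 2 * Y 0) • ((β/2) • e₂) +
  (X 2 * Y 1) • (-(β/2) • e₁ - α • e₃) +
  (X 2 * Y 2) • (-α • e₂)

/-- `∇` satisfies the Koszul formula characterizing the Levi-Civita connection
of the left-invariant Lorentzian metric `g` on `G₁`. -/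
theorem G1_LeviCivita_Koszul (α β : ℝ) (X Y Z : Fin 3 → ℝ) :
    2 * g (nabla α β X Y) Z =
      g (bracket α β X Y) Z - g (bracket α β Y Z) X + g (bracket α β Z X) Y := by
  simp only [g, nabla, bracket, e₁, e₂, e₃, Pi.add_apply, Pi.sub_apply, Pi.smul_apply, Pi.neg_apply, smul_eq_mul, Matrix.cons_val_zero, Matrix.cons_val_one, Matrix.head_cons, Matrix.cons_val_two, Matrix.tail_cons]
  ring

end
end

section
/- Let α, β be real numbers. On ℝ³ with standard basis e₁, e₂, e₃, let the bracket be the bilinear antisymmetric map determined by [e₁,e₂] = α•e₁ - β•e₃, [e₁,e₃] = -α•e₁ - β•e₂, [e₂,e₃] = β•e₁ + α•e₂ + α•e₃ (the Lie algebra of G₁), let ∇ be the bilinear map ℝ³ → ℝ³ → ℝ³ determined on basis vectors by ∇_{e₁}e₁ = -α•e₂ - α•e₃, ∇_{e₂}e₁ = (β/2)•e₃, ∇_{e₃}e₁ = (β/2)•e₂, ∇_{e₁}e₂ = α•e₁ - (β/2)•e₃, ∇_{e₂}e₂ = α•e₃, ∇_{e₃}e₂ = -(β/2)•e₁ - α•e₃,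 ∇_{e₁}e₃ = -α•e₁ - (β/2)•e₂, ∇_{e₂}e₃ = (β/2)•e₁ + α•e₂, ∇_{e₃}e₃ = -α•e₂ (the Levi-Civita connection of G₁), and define R(X,Y)Z = ∇_X(∇_Y Z) - ∇_Y(∇_X Z) - ∇_{[X,Y]}Z and ρ(X,Y) = -g(R(X,e₁)Y, e₁) - g(R(X,e₂)Y, e₂) + g(R(X,e₃)Y, e₃). Then ρ(e₁,e₁) = -β²/2, ρ(e₁,e₂) = -α*β, ρ(e₁,e₃) = α*β, ρ(e₂,e₂) = -2*α² - β²/2, ρ(e₂,e₃) = 2*α², and ρ(e₃,e₃) = -2*α² + β²/2; equivalently, the Ricci operator ρ⁰ defined by ρ(X,Y) = g(ρ⁰(X),Y) satisfies ρ⁰(e₁) = -(β²/2)•e₁ - (α*β)•e₂ - (α*β)•e₃, ρ⁰(e₂) = -(α*β)•e₁ - (2*α² + β²/2)•e₂ - (2*α²)•e₃, ρ⁰(e₃) = (α*β)•e₁ + (2*α²)•e₂ + (2*α² - β²/2)•e₃. -/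
noncomputable section

/-- Curvature tensor `R(X,Y)Z = ∇_X∇_Y Z - ∇_Y∇_X Z - ∇_[X,Y] Z` of `G₁`. -/
def R (α β : ℝ) (X Y Z : Fin 3 → ℝ) : Fin 3 → ℝ :=
  nabla α β X (nabla α β Y Z) - nabla α β Y (nabla α β X Z) -
    nabla α β (bracket α β X Y) Z

/-- Ricci tensor `ρ(X,Y) = -g(R(X,e₁)Y,e₁) - g(R(X,e₂)Y,e₂) + g(R(X,e₃)Y,e₃)` of `G₁`. -/
def ρ (α β : ℝ) (X Y : Fin 3 → ℝ) : ℝ :=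
  - g (R α β X e₁ Y) e₁ - g (R α β X e₂ Y) e₂ + g (R α β X e₃ Y) e₃

/-- The Ricci tensor of `G₁` (formula (2.8) of the paper): its values on the basis,
and equivalently the Ricci operator `ρ⁰` characterized by `ρ(X,Y) = g(ρ⁰X, Y)`. -/
theorem G1_Ricci (α β : ℝ) :
    (ρ α β e₁ e₁ = -β^2/2 ∧ ρ α β e₁ e₂ = -(α*β) ∧ ρ α β e₁ e₃ = α*β ∧
     ρ α β e₂ e₂ = -2*α^2 - β^2/2 ∧ ρ α β e₂ e₃ = 2*α^2 ∧
     ρ α β e₃ e₃ = -2*α^2 + β^2/2) ∧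
    ((∀ Y, ρ α β e₁ Y = g (-(β^2/2) • e₁ - (α*β) • e₂ - (α*β) • e₃) Y) ∧
     (∀ Y, ρ α β e₂ Y = g (-(α*β) • e₁ - (2*α^2 + β^2/2) • e₂ - (2*α^2) • e₃) Y) ∧
     (∀ Y, ρ α β e₃ Y = g ((α*β) • e₁ + (2*α^2) • e₂ + (2*α^2 - β^2/2) • e₃) Y)) := by
  refine ⟨⟨?_, ?_, ?_, ?_, ?_, ?_⟩, fun Y => ?_, fun Y => ?_, fun Y => ?_⟩ <;>
    simp only [ρ, R, nabla, bracket, g, e₁, e₂, e₃, Pi.sub_apply, Pi.add_apply, Pi.smul_apply,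
      Pi.neg_apply, Matrix.cons_val_zero, Matrix.cons_val_one, Matrix.head_cons,
      Matrix.cons_val_two, Matrix.tail_cons, smul_eq_mul, neg_mul, mul_neg, mul_zero, zero_mul,
      mul_one, one_mul, add_zero, zero_add, neg_zero, sub_zero, zero_sub, neg_neg] <;> ring

end
end
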